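/- Let P and Q be row-stochastic matrices on the same finite nonempty set S such that P_{s,s'} > 0 implies Q_{s,s'} > 0 for all s, s' ∈ S. If P has exactly one recurrent communicating class, then Q has exactly one recurrent communicating class. -/
import Mathlib


open Finset

variable {S : Type*}

/-- A row-stochastic matrix: nonnegative entries, each row sums to `1`. -/
def RowStochastic [Fintype S] (P : Matrix S S ℝ) : Prop :=
  (∀ s s', 0 ≤ P s s') ∧ ∀ s, ∑ s', P s s' = 1

/-- State `s` leads to `s'` if `(P ^ k) s s' > 0` for some `k ≥ 0`. -/
def Leads [Fintype S] [DecidableEq S] (P : Matrix S S ℝ) (s s' : S) : Prop :=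
  ∃ k : ℕ, 0 < (P ^ k) s s'

/-- A state is recurrent if every state it leads to leads back to it. -/
def Recurrent [Fintype S] [DecidableEq S] (P : Matrix S S ℝ) (s : S) : Prop :=
  ∀ s', Leads P s s' → Leads P s' s

/-- `P` has exactly one recurrent communicating class: the set of recurrent states is nonempty
and every two recurrent states lead to each other. -/
def UniqueRecurrentClass [Fintype S] [DecidableEq S] (P : Matrix S S ℝ) : Prop :=
  (∃ s, Recurrent P s) ∧ ∀ s s', Recurrent P s → Recurrent P s' → Leads P s s'

section Aux

variable [Fintype S] [DecidableEq S]

lemma pow_entry_nonneg {P : Matrix S S ℝ} (h : ∀ s s', 0 ≤ P s s') (k : ℕ) :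
    ∀ s s', 0 ≤ (P ^ k) s s' := by
  induction k with
  | zero => intro s s'; simp [Matrix.one_apply]; positivity
  | succ n ih =>
      intro s s'
      rw [pow_succ, Matrix.mul_apply]
      exact Finset.sum_nonneg fun t _ => mul_nonneg (ih s t) (h t s')

lemma leads_refl {P : Matrix S S ℝ} (s : S) : Leads P s s :=
  ⟨0, by simp [Matrix.one_apply]⟩

lemma leads_trans {P : Matrix S S ℝ} (h : ∀ s s', 0 ≤ P s s') {s t u : S}
    (h1 : Leads P s t) (h2 : Leads P t u) : Leads P s u := by
  obtain ⟨k, hk⟩ := h1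
  obtain ⟨l, hl⟩ := h2
  refine ⟨k + l, ?_⟩
  rw [pow_add, Matrix.mul_apply]
  refine Finset.sum_pos' (fun i _ => mul_nonneg (pow_entry_nonneg h k s i)
    (pow_entry_nonneg h l i u)) ⟨t, Finset.mem_univ t, mul_pos hk hl⟩

lemma leads_mono {P Q : Matrix S S ℝ} (hP : ∀ s s', 0 ≤ P s s')
    (hQ : ∀ s s', 0 ≤ Q s s') (hsupp : ∀ s s', 0 < P s s' → 0 < Q s s')
    {s s' : S} (h : Leads P s s') : Leads Q s s' := by
  obtain ⟨k, hk⟩ := h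
  refine ⟨k, ?_⟩
  suffices H : ∀ (k : ℕ) (s s' : S), 0 < (P ^ k) s s' → 0 < (Q ^ k) s s' from H k s s' hk
  clear hk s s'
  intro k
  induction k with
  | zero => intro s s' hk; simpa using hk
  | succ n ih =>
      intro s s' hk
      rw [pow_succ', Matrix.mul_apply] at hk ⊢
      obtain ⟨t, -, ht⟩ := Finset.exists_lt_of_sum_lt (by simpa using hk :
        ∑ t, (0 : ℝ) < ∑ t, P s t * (P ^ n) t s')
      have h1 : 0 < P s t := by
        by_contra hc
        push_neg at hc
        have : P s t = 0 := le_antisymm hc (hP s t)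
        simp [this] at ht
      have h2 : 0 < (P ^ n) t s' := by
        by_contra hc
        push_neg at hc
        have : (P ^ n) t s' = 0 := le_antisymm hc (pow_entry_nonneg hP n t s')
        simp [this] at ht
      refine Finset.sum_pos' (fun i _ => mul_nonneg (hQ s i)
        (pow_entry_nonneg hQ n i s')) ⟨t, Finset.mem_univ t,
        mul_pos (hsupp s t h1) (ih t s' h2)⟩

lemma exists_recurrent (Q : Matrix S S ℝ) (hQ : ∀ s s', 0 ≤ Q s s') (s : S) :
    ∃ r, Leads Q s r ∧ Recurrent Q r := by
  classical
  suffices H : ∀ n (s : S), (Finset.univ.filter (fun t => Leads Q s t)).card ≤ n →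
      ∃ r, Leads Q s r ∧ Recurrent Q r from H _ s le_rfl
  intro n
  induction n with
  | zero =>
      intro s h
      exfalso
      have : s ∈ Finset.univ.filter (fun t => Leads Q s t) := by
        simp [leads_refl]
      have := Finset.card_pos.mpr ⟨s, this⟩
      omega
  | succ n ih =>
      intro s h
      by_cases hs : Recurrent Q s
      · exact ⟨s, leads_refl s, hs⟩
      · simp only [Recurrent, not_forall] at hs
        obtain ⟨t, hst, hts⟩ := hs
        have hsub : Finset.univ.filter (fun u => Leads Q t u) ⊂
            Finset.univ.filter (fun u => Leads Q s u) := by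
          constructor
          · intro u hu
            simp only [Finset.mem_filter, Finset.mem_univ, true_and] at hu ⊢
            exact leads_trans hQ hst hu
          · intro hc
            have : s ∈ Finset.univ.filter (fun u => Leads Q t u) := by
              apply hc; simp [leads_refl]
            simp only [Finset.mem_filter] at this
            exact hts this.2
        have hcard := Finset.card_lt_card hsub
        obtain ⟨r, htr, hr⟩ := ih t (by omega)
        exact ⟨r, leads_trans hQ hst htr, hr⟩

end Aux

/-- If `P` and `Q` are row-stochastic matrices on the same finite nonempty set
with the support of `P` contained in the support of `Q`, and `P` has exactly one recurrent
communicating class, then so does `Q`. -/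
theorem stmt2 [Fintype S] [DecidableEq S] [Nonempty S] (P Q : Matrix S S ℝ)
    (hP : RowStochastic P) (hQ : RowStochastic Q)
    (hsupp : ∀ s s', 0 < P s s' → 0 < Q s s')
    (hrec : UniqueRecurrentClass P) :
    UniqueRecurrentClass Q := by
  obtain ⟨hP0, -⟩ := hP
  obtain ⟨hQ0, -⟩ := hQ
  constructor
  · obtain ⟨s⟩ := ‹Nonempty S›
    obtain ⟨r, -, hr⟩ := exists_recurrent Q hQ0 s
    exact ⟨r, hr⟩
  · intro s s' hs hs'
    obtain ⟨r, hsr, hr⟩ := exists_recurrent P hP0 s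
    obtain ⟨r', hsr', hr'⟩ := exists_recurrent P hP0 s'
    have hQsr : Leads Q s r := leads_mono hP0 hQ0 hsupp hsr
    have hQsr' : Leads Q s' r' := leads_mono hP0 hQ0 hsupp hsr'
    have hQrr' : Leads Q r r' := leads_mono hP0 hQ0 hsupp (hrec.2 r r' hr hr')
    have hQr's' : Leads Q r' s' := hs' r' hQsr'
    exact leads_trans hQ0 hQsr (leads_trans hQ0 hQrr' hQr's')
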